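/- Let p be a prime with p ≡ 1 (mod 4), let i ∈ Z/pZ satisfy i² = −1, and write 2/3 for 2·3⁻¹ in Z/pZ. Let x⁺ = (2/3, 1, 1 + (2/3)i) and x⁻ = (2/3, 1, 1 − (2/3)i). Then the orbit of x⁺ under rot₁ is M⁺ = {(2/3, 1 + (2/3)in, 1 + (2/3)i(n+1)) : n ∈ Z}, the orbit of x⁻ under rot₁ is M⁻ = {(2/3, 1 − (2/3)in, 1 − (2/3)i(n+1)) : n ∈ Z}, these two orbits are disjoint, each contains exactly p elements, and C₁(2/3) = M⁺ ∪ M⁻. -/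

import Mathlib

namespace Markoff

variable {R : Type*} [CommRing R]

/-- The three rotations acting on triples. -/
def rot (i : Fin 3) : R × R × R → R × R × R :=
  ![fun x => (x.1, x.2.2, 3 * x.1 * x.2.2 - x.2.1),
    fun x => (x.2.2, x.2.1, 3 * x.2.1 * x.2.2 - x.1),
    fun x => (x.2.1, 3 * x.2.1 * x.2.2 - x.1, x.2.2)] i

/-- The `i`-th coordinate of a triple. -/
def coord (i : Fin 3) (x : R × R × R) : R := ![x.1, x.2.1, x.2.2] i

/-- The Markoff equation. -/
def IsMarkoff (x : R × R × R) : Prop :=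
  x.1 ^ 2 + x.2.1 ^ 2 + x.2.2 ^ 2 = 3 * x.1 * x.2.1 * x.2.2

/-- The nonzero Markoff points mod `p`. -/
def Xstar (p : ℕ) : Set (ZMod p × ZMod p × ZMod p) :=
  {x | IsMarkoff x ∧ x ≠ (0, 0, 0)}

/-- The rotations as permutations. -/
def rotPerm (i : Fin 3) : Equiv.Perm (R × R × R) where
  toFun := rot i
  invFun := ![fun y => (y.1, 3 * y.1 * y.2.1 - y.2.2, y.2.1),
              fun y => (3 * y.1 * y.2.1 - y.2.2, y.2.1, y.1),
              fun y => (3 * y.1 * y.2.2 - y.2.1, y.1, y.2.2)] i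
  left_inv := by
    fin_cases i <;> rintro ⟨a, b, c⟩ <;>
      simp [rot, Matrix.cons_val_zero, Matrix.cons_val_one] <;> ring
  right_inv := by
    fin_cases i <;> rintro ⟨a, b, c⟩ <;>
      simp [rot, Matrix.cons_val_zero, Matrix.cons_val_one] <;> ring

/-- The `i`-th rotation order: the least `n > 0` with `rot i ^[n] x = x`. -/
noncomputable def ordi (p : ℕ) (i : Fin 3) (x : ZMod p × ZMod p × ZMod p) : ℕ :=
  sInf {n | 0 < n ∧ (rot i)^[n] x = x}

/-- The rotation order: max of the three rotation orders. -/
noncomputable def ordp (p : ℕ) (x : ZMod p × ZMod p × ZMod p) : ℕ :=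
  max (ordi p 0 x) (max (ordi p 1 x) (ordi p 2 x))

/-- The size of an integer triple. -/
def size (x : ℤ × ℤ × ℤ) : ℤ := max x.1 (max x.2.1 x.2.2)

/-- `t` is a lift of `x` mod `p`. -/
def IsLift (p : ℕ) (t : ℤ × ℤ × ℤ) (x : ZMod p × ZMod p × ZMod p) : Prop :=
  IsMarkoff t ∧ ((t.1 : ZMod p), (t.2.1 : ZMod p), (t.2.2 : ZMod p)) = x

noncomputable def eps : ℝ := (3 + Real.sqrt 5) / 2

/-- Apply a word of rotations: `rotWord [(i₁,n₁),…,(i_s,n_s)] x = rot_{i_s}^{n_s} ⋯ rot_{i_1}^{n_1} x`. -/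
def rotWord (w : List (Fin 3 × ℕ)) (x : R × R × R) : R × R × R :=
  w.foldl (fun y q => (rot q.1)^[q.2] y) x

/-- `x` is a maximal triple. -/
def IsMax (p : ℕ) (x : ZMod p × ZMod p × ZMod p) : Prop :=
  ∃ i : Fin 3, ordi p i x = p - 1 ∨ ordi p i x = p + 1 ∨ ordi p i x = 2 * p

/-- The cage: maximal triples in `X*(p)`. -/
def Cage (p : ℕ) : Set (ZMod p × ZMod p × ZMod p) :=
  {x ∈ Xstar p | IsMax p x}

/-- The conic section `C_i(a)`. -/
def Ci (p : ℕ) (i : Fin 3) (a : ZMod p) : Set (ZMod p × ZMod p × ZMod p) :=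
  {x ∈ Xstar p | coord i x = a}



section helpers

variable {q : ℕ}

lemma rotPerm0_apply (x : ZMod q × ZMod q × ZMod q) :
    rotPerm 0 x = (x.1, x.2.2, 3 * x.1 * x.2.2 - x.2.1) := rfl

lemma rot_step (a e m : ZMod q) (ha : 3 * a = 2) :
    rotPerm 0 ((a, 1 + e * m, 1 + e * (m + 1)) : ZMod q × ZMod q × ZMod q)
      = (a, 1 + e * (m + 1), 1 + e * (m + 1 + 1)) := by
  rw [rotPerm0_apply]
  refine Prod.ext rfl (Prod.ext rfl ?_)
  linear_combination (1 + e * (m + 1)) * ha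

lemma orbit_gen (a e : ZMod q) (ha : 3 * a = 2) : ∀ n : ℤ,
    (rotPerm 0 ^ n) ((a, 1, 1 + e) : ZMod q × ZMod q × ZMod q) =
      (a, 1 + e * (n : ZMod q), 1 + e * ((n : ZMod q) + 1)) := by
  intro n
  induction n using Int.induction_on with
  | zero =>
      simp only [zpow_zero, Equiv.Perm.coe_one, id_eq, Int.cast_zero]
      exact Prod.ext rfl (Prod.ext (by ring) (by ring))
  | succ n ih =>
      rw [show ((n : ℤ) + 1) = 1 + n by ring, zpow_add, zpow_one, Equiv.Perm.mul_apply, ih,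
        rot_step a e _ ha]
      exact Prod.ext rfl (Prod.ext (by push_cast; ring) (by push_cast; ring))
  | pred n ih =>
      apply (rotPerm 0).injective
      rw [← Equiv.Perm.mul_apply, ← zpow_one_add, show (1 + (-(n : ℤ) - 1)) = -(n : ℤ) by ring,
        ih, rot_step a e _ ha]
      exact Prod.ext rfl (Prod.ext (by push_cast; ring) (by push_cast; ring))

end helpers

theorem stmt_17 (p : ℕ) (hp : p.Prime) (hp4 : p % 4 = 1)
    (i : ZMod p) (hi : i ^ 2 = -1) :
    ({y | ∃ n : ℤ, (rotPerm 0 ^ n) ((2 * (3 : ZMod p)⁻¹, 1,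
          1 + 2 * (3 : ZMod p)⁻¹ * i) : ZMod p × ZMod p × ZMod p) = y} =
        {y : ZMod p × ZMod p × ZMod p | ∃ n : ℤ,
          y = (2 * (3 : ZMod p)⁻¹, 1 + 2 * (3 : ZMod p)⁻¹ * i * (n : ZMod p),
            1 + 2 * (3 : ZMod p)⁻¹ * i * ((n : ZMod p) + 1))}) ∧
    ({y | ∃ n : ℤ, (rotPerm 0 ^ n) ((2 * (3 : ZMod p)⁻¹, 1,
          1 - 2 * (3 : ZMod p)⁻¹ * i) : ZMod p × ZMod p × ZMod p) = y} =
        {y : ZMod p × ZMod p × ZMod p | ∃ n : ℤ,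
          y = (2 * (3 : ZMod p)⁻¹, 1 - 2 * (3 : ZMod p)⁻¹ * i * (n : ZMod p),
            1 - 2 * (3 : ZMod p)⁻¹ * i * ((n : ZMod p) + 1))}) ∧
    Disjoint
      {y : ZMod p × ZMod p × ZMod p | ∃ n : ℤ,
        y = (2 * (3 : ZMod p)⁻¹, 1 + 2 * (3 : ZMod p)⁻¹ * i * (n : ZMod p),
          1 + 2 * (3 : ZMod p)⁻¹ * i * ((n : ZMod p) + 1))}
      {y : ZMod p × ZMod p × ZMod p | ∃ n : ℤ,
        y = (2 * (3 : ZMod p)⁻¹, 1 - 2 * (3 : ZMod p)⁻¹ * i * (n : ZMod p),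
          1 - 2 * (3 : ZMod p)⁻¹ * i * ((n : ZMod p) + 1))} ∧
    {y : ZMod p × ZMod p × ZMod p | ∃ n : ℤ,
        y = (2 * (3 : ZMod p)⁻¹, 1 + 2 * (3 : ZMod p)⁻¹ * i * (n : ZMod p),
          1 + 2 * (3 : ZMod p)⁻¹ * i * ((n : ZMod p) + 1))}.ncard = p ∧
    {y : ZMod p × ZMod p × ZMod p | ∃ n : ℤ,
        y = (2 * (3 : ZMod p)⁻¹, 1 - 2 * (3 : ZMod p)⁻¹ * i * (n : ZMod p),
          1 - 2 * (3 : ZMod p)⁻¹ * i * ((n : ZMod p) + 1))}.ncard = p ∧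
    Ci p 0 (2 * (3 : ZMod p)⁻¹) =
      {y : ZMod p × ZMod p × ZMod p | ∃ n : ℤ,
        y = (2 * (3 : ZMod p)⁻¹, 1 + 2 * (3 : ZMod p)⁻¹ * i * (n : ZMod p),
          1 + 2 * (3 : ZMod p)⁻¹ * i * ((n : ZMod p) + 1))} ∪
      {y : ZMod p × ZMod p × ZMod p | ∃ n : ℤ,
        y = (2 * (3 : ZMod p)⁻¹, 1 - 2 * (3 : ZMod p)⁻¹ * i * (n : ZMod p),
          1 - 2 * (3 : ZMod p)⁻¹ * i * ((n : ZMod p) + 1))} := by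
  haveI : Fact p.Prime := ⟨hp⟩
  have hp2 : p ≠ 2 := by intro h; rw [h] at hp4; norm_num at hp4
  have hp3 : p ≠ 3 := by intro h; rw [h] at hp4; norm_num at hp4
  have h2 : (2 : ZMod p) ≠ 0 := by
    intro h
    rw [show ((2 : ZMod p)) = ((2 : ℕ) : ZMod p) by norm_cast,
      ZMod.natCast_eq_zero_iff] at h
    exact hp2 ((Nat.prime_dvd_prime_iff_eq hp Nat.prime_two).mp h)
  have h3 : (3 : ZMod p) ≠ 0 := by
    intro h
    rw [show ((3 : ZMod p)) = ((3 : ℕ) : ZMod p) by norm_cast,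
      ZMod.natCast_eq_zero_iff] at h
    exact hp3 ((Nat.prime_dvd_prime_iff_eq hp Nat.prime_three).mp h)
  set c : ZMod p := 2 * (3 : ZMod p)⁻¹ with hcdef
  have hc : 3 * c = 2 := by
    rw [hcdef, mul_comm (2 : ZMod p), ← mul_assoc, mul_inv_cancel₀ h3, one_mul]
  have hc0 : c ≠ 0 := mul_ne_zero h2 (inv_ne_zero h3)
  have hi0 : i ≠ 0 := by
    intro h
    rw [h] at hi
    have : (1 : ZMod p) = 0 := by linear_combination hi
    exact one_ne_zero this
  have hci : c * i ≠ 0 := mul_ne_zero hc0 hi0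
  have horb : ∀ e : ZMod p,
      {y | ∃ n : ℤ, (rotPerm 0 ^ n) ((c, 1, 1 + e) : ZMod p × ZMod p × ZMod p) = y} =
        {y : ZMod p × ZMod p × ZMod p | ∃ n : ℤ,
          y = (c, 1 + e * (n : ZMod p), 1 + e * ((n : ZMod p) + 1))} := by
    intro e
    ext y
    simp only [Set.mem_setOf_eq]
    constructor
    · rintro ⟨n, h⟩; exact ⟨n, by rw [← h, orbit_gen c e hc n]⟩
    · rintro ⟨n, rfl⟩; exact ⟨n, orbit_gen c e hc n⟩
  have hconv : {y : ZMod p × ZMod p × ZMod p | ∃ n : ℤ,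
        y = (c, 1 - c * i * (n : ZMod p), 1 - c * i * ((n : ZMod p) + 1))} =
      {y : ZMod p × ZMod p × ZMod p | ∃ n : ℤ,
        y = (c, 1 + -(c * i) * (n : ZMod p), 1 + -(c * i) * ((n : ZMod p) + 1))} := by
    ext y
    simp only [Set.mem_setOf_eq]
    constructor <;> rintro ⟨n, rfl⟩ <;>
      exact ⟨n, Prod.ext rfl (Prod.ext (by ring) (by ring))⟩
  have hstartm : ((c, 1, 1 - c * i) : ZMod p × ZMod p × ZMod p) = (c, 1, 1 + -(c * i)) :=
    Prod.ext rfl (Prod.ext rfl (by ring))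
  have hcard : ∀ e : ZMod p, e ≠ 0 →
      ({y : ZMod p × ZMod p × ZMod p | ∃ n : ℤ,
        y = (c, 1 + e * (n : ZMod p), 1 + e * ((n : ZMod p) + 1))}).ncard = p := by
    intro e he
    have hrange : {y : ZMod p × ZMod p × ZMod p | ∃ n : ℤ,
          y = (c, 1 + e * (n : ZMod p), 1 + e * ((n : ZMod p) + 1))} =
        Set.range (fun m : ZMod p => ((c, 1 + e * m, 1 + e * (m + 1)) :
          ZMod p × ZMod p × ZMod p)) := by
      ext y
      simp only [Set.mem_setOf_eq, Set.mem_range]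
      constructor
      · rintro ⟨n, rfl⟩; exact ⟨(n : ZMod p), rfl⟩
      · rintro ⟨m, rfl⟩
        obtain ⟨n, rfl⟩ := ZMod.intCast_surjective m
        exact ⟨n, rfl⟩
    have hinj : Function.Injective (fun m : ZMod p => ((c, 1 + e * m, 1 + e * (m + 1)) :
        ZMod p × ZMod p × ZMod p)) := by
      intro m1 m2 h
      rw [Prod.mk.injEq, Prod.mk.injEq] at h
      have h' : e * m1 = e * m2 := by linear_combination h.2.1
      exact mul_left_cancel₀ he h'
    rw [hrange, ← Set.image_univ, Set.ncard_image_of_injective _ hinj, Set.ncard_univ,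
      Nat.card_zmod]
  refine ⟨horb (c * i), ?_, ?_, hcard (c * i) hci, ?_, ?_⟩
  · rw [hstartm, horb (-(c * i)), ← hconv]
  · rw [Set.disjoint_left]
    rintro y ⟨n, rfl⟩ ⟨m, hm⟩
    rw [Prod.mk.injEq, Prod.mk.injEq] at hm
    have hzero : c * i * 2 = 0 := by linear_combination hm.2.2 - hm.2.1
    exact (mul_ne_zero hci h2) hzero
  · rw [hconv]
    exact hcard (-(c * i)) (neg_ne_zero.mpr hci)
  · ext x
    obtain ⟨a, b, d⟩ := x
    simp only [Ci, Xstar, Set.mem_setOf_eq, Set.mem_union, coord, Matrix.cons_val_zero,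
      IsMarkoff]
    constructor
    · rintro ⟨⟨hM, hne⟩, hcoord⟩
      subst hcoord
      have key : (d - b - c * i) * (d - b + c * i) = 0 := by
        linear_combination hM + b * d * hc - c ^ 2 * hi
      rcases mul_eq_zero.mp key with hcase | hcase
      · left
        obtain ⟨n, hn⟩ := ZMod.intCast_surjective ((b - 1) * (c * i)⁻¹)
        have hX : c * i * ((b - 1) * (c * i)⁻¹) = b - 1 := by
          rw [mul_comm (c * i), mul_assoc, inv_mul_cancel₀ hci, mul_one]
        refine ⟨n, ?_⟩
        refine Prod.ext rfl (Prod.ext ?_ ?_)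
        · show b = _; rw [hn]; linear_combination -hX
        · show d = _; rw [hn]; linear_combination hcase - hX
      · right
        obtain ⟨n, hn⟩ := ZMod.intCast_surjective ((1 - b) * (c * i)⁻¹)
        have hX : c * i * ((1 - b) * (c * i)⁻¹) = 1 - b := by
          rw [mul_comm (c * i), mul_assoc, inv_mul_cancel₀ hci, mul_one]
        refine ⟨n, ?_⟩
        refine Prod.ext rfl (Prod.ext ?_ ?_)
        · show b = _; rw [hn]; linear_combination hX
        · show d = _; rw [hn]; linear_combination hcase + hX
    · rintro (⟨n, hn⟩ | ⟨n, hn⟩) <;> rw [Prod.mk.injEq, Prod.mk.injEq] at hn <;>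
        obtain ⟨rfl, rfl, rfl⟩ := hn
      · refine ⟨⟨?_, ?_⟩, rfl⟩
        · linear_combination
            (-((1 + c * i * (n : ZMod p)) * (1 + c * i * ((n : ZMod p) + 1)))) * hc
              + c ^ 2 * hi
        · intro h
          rw [Prod.mk.injEq, Prod.mk.injEq] at h
          exact hc0 h.1
      · refine ⟨⟨?_, ?_⟩, rfl⟩
        · linear_combination
            (-((1 - c * i * (n : ZMod p)) * (1 - c * i * ((n : ZMod p) + 1)))) * hc
              + c ^ 2 * hi
        · intro h
          rw [Prod.mk.injEq, Prod.mk.injEq] at h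
          exact hc0 h.1


end Markoff
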